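/- Let q be an odd prime power and n = (q^4 - 1)/(q+1). Then ((q-1)·q^3 - q^2 - q - 2)/(q+1) is the second largest q-cyclotomic coset leader modulo n; the largest is ((q-1)·q^3 - q^2 - 1)/(q+1), and there is no coset leader strictly between them. -/

import Mathlib

private lemma mod_eq_of' (a n t w : ℕ) (h : a = n * t + w) (hw : w < n) : a % n = w := by
  subst h; rw [Nat.mul_add_mod, Nat.mod_eq_of_lt hw]

private lemma div1' (c : ℕ) :
    ((c+3) ^ 4 - 1) / ((c+3) + 1) = (c+2) * ((c+3)^2 + 1) := by
  have h : (c+3)^4 = ((c+3)+1) * ((c+2) * ((c+3)^2 + 1)) + 1 := by ring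
  have h2 : (c+3)^4 - 1 = ((c+3)+1) * ((c+2) * ((c+3)^2 + 1)) := by omega
  rw [h2, Nat.mul_div_cancel_left _ (by omega)]

private lemma div2' (c : ℕ) :
    (((c+3) - 1) * (c+3) ^ 3 - (c+3) ^ 2 - 1) / ((c+3) + 1) = (c+1) * ((c+3)^2 + 1) + 1 := by
  have h0 : (c+3) - 1 = c + 2 := by omega
  have h : (c+2) * (c+3)^3 = ((c+3)+1) * ((c+1) * ((c+3)^2 + 1) + 1) + ((c+3)^2 + 1) := by ring
  have h2 : (c+2) * (c+3) ^ 3 - (c+3) ^ 2 - 1 = ((c+3)+1) * ((c+1) * ((c+3)^2 + 1) + 1) := by omega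
  rw [h0, h2, Nat.mul_div_cancel_left _ (by omega)]

private lemma div3' (c : ℕ) :
    (((c+3) - 1) * (c+3) ^ 3 - (c+3) ^ 2 - (c+3) - 2) / ((c+3) + 1) = (c+1) * ((c+3)^2 + 1) := by
  have h0 : (c+3) - 1 = c + 2 := by omega
  have h : (c+2) * (c+3)^3 = ((c+3)+1) * ((c+1) * ((c+3)^2 + 1)) + ((c+3)^2 + (c+3) + 2) := by
    ring
  have h2 : (c+2) * (c+3) ^ 3 - (c+3) ^ 2 - (c+3) - 2 = ((c+3)+1) * ((c+1) * ((c+3)^2 + 1)) := by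
    omega
  rw [h0, h2, Nat.mul_div_cancel_left _ (by omega)]

theorem stmt_9 (q : ℕ) (hq : IsPrimePow q) (hodd : Odd q) :
    (∀ j : ℕ,
        ((q - 1) * q ^ 3 - q ^ 2 - q - 2) / (q + 1) ≤
          (((q - 1) * q ^ 3 - q ^ 2 - q - 2) / (q + 1) * q ^ j) % ((q ^ 4 - 1) / (q + 1))) ∧
    (∀ j : ℕ,
        ((q - 1) * q ^ 3 - q ^ 2 - 1) / (q + 1) ≤
          (((q - 1) * q ^ 3 - q ^ 2 - 1) / (q + 1) * q ^ j) % ((q ^ 4 - 1) / (q + 1))) ∧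
    (∀ δ : ℕ, ((q - 1) * q ^ 3 - q ^ 2 - 1) / (q + 1) < δ → δ < (q ^ 4 - 1) / (q + 1) →
        ∃ j : ℕ, (δ * q ^ j) % ((q ^ 4 - 1) / (q + 1)) < δ) ∧
    (∀ δ : ℕ, ((q - 1) * q ^ 3 - q ^ 2 - q - 2) / (q + 1) < δ →
        δ < ((q - 1) * q ^ 3 - q ^ 2 - 1) / (q + 1) →
        ∃ j : ℕ, (δ * q ^ j) % ((q ^ 4 - 1) / (q + 1)) < δ) := by
  have hq2 : 2 ≤ q := hq.two_le
  have hq3 : 3 ≤ q := by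
    obtain ⟨k, hk⟩ := hodd; omega
  clear hq hodd
  obtain ⟨c, rfl⟩ : ∃ c, q = c + 3 := ⟨q - 3, by omega⟩
  clear hq2 hq3
  rw [div1' c, div2' c, div3' c]
  set K : ℕ := (c+3)^2 + 1 with hK
  set n : ℕ := (c+2) * K with hn
  set d2 : ℕ := (c+1) * K with hd2
  have hsq : (c+3)^2 = c^2+6*c+9 := by ring
  have hKlin : K = c^2+6*c+10 := by rw [hK]; omega
  have hnlin : n = c^3+8*c^2+22*c+20 := by rw [hn, hKlin]; ring
  have hd2lin : d2 = c^3+7*c^2+16*c+10 := by rw [hd2, hKlin]; ring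
  have hd2n : d2 < n := by omega
  have hnpos : 0 < n := by omega
  -- d2 is fixed by multiplication by q mod n
  have hstep : d2 * (c+3) = n * (c+1) + d2 := by rw [hd2, hn, hK]; ring
  have hfix : ∀ j : ℕ, (d2 * (c+3) ^ j) % n = d2 := by
    intro j
    induction j with
    | zero => simpa using Nat.mod_eq_of_lt hd2n
    | succ j ih =>
      have h : d2 * (c+3) ^ (j+1) = (d2 * (c+3)^j) * (c+3) := by ring
      rw [h, ← Nat.mod_mul_mod, ih, hstep, Nat.mul_add_mod, Nat.mod_eq_of_lt hd2n]
  -- powers of q mod n have period 4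
  have h4 : (c+3)^4 % n = 1 % n := by
    have h : (c+3)^4 = n * ((c+3)+1) + 1 := by rw [hn, hK]; ring
    rw [h, Nat.mul_add_mod]
  have hmod4 : ∀ (a j : ℕ), (a * (c+3)^j) % n = (a * (c+3)^(j % 4)) % n := by
    intro a j
    conv_lhs => rw [show j = 4 * (j / 4) + j % 4 by omega]
    rw [pow_add, pow_mul, ← mul_assoc]
    have h1 : ((c+3)^4)^(j/4) ≡ 1^(j/4) [MOD n] := Nat.ModEq.pow _ h4
    have h2 : a * ((c+3)^4)^(j/4) * (c+3)^(j%4) ≡ a * 1^(j/4) * (c+3)^(j%4) [MOD n] :=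
      ((h1.mul_left a).mul_right _)
    exact (by simpa [one_pow] using h2 : a * ((c+3)^4)^(j/4) * (c+3)^(j%4) ≡ a * (c+3)^(j%4) [MOD n])
  refine ⟨?_, ?_, ?_, ?_⟩
  · intro j; rw [hfix j]
  · -- second largest: d1 = d2 + 1
    intro j
    rw [hmod4]
    have hj4 : j % 4 = 0 ∨ j % 4 = 1 ∨ j % 4 = 2 ∨ j % 4 = 3 := by omega
    rcases hj4 with h|h|h|h <;> rw [h]
    · have e : (d2+1) * (c+3)^0 % n = d2 + 1 :=
        mod_eq_of' _ _ 0 _ (by ring) (by omega)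
      rw [e]
    · have e : (d2+1) * (c+3)^1 % n = d2 + (c+3) :=
        mod_eq_of' _ _ (c+1) _ (by rw [hd2, hn, hK]; ring) (by omega)
      rw [e]; omega
    · have e : (d2+1) * (c+3)^2 % n = d2 + (c^2+6*c+9) :=
        mod_eq_of' _ _ ((c+1)*(c+4)) _ (by rw [hd2, hn, hK]; ring) (by omega)
      rw [e]; omega
    · have e : (d2+1) * (c+3)^3 % n = d2 + (c^2+5*c+7) :=
        mod_eq_of' _ _ ((c+1)*((c+3)^2+(c+3)+1) + 1) _
          (by rw [hd2, hn, hK]; ring) (by omega)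
      rw [e]; omega
  · -- largest coset leader part 3
    intro δ h1 h2
    set r : ℕ := n - δ with hr
    have hδr : δ + r = n := by omega
    have hrpos : 1 ≤ r := by omega
    have hrK : r < c^2+6*c+9 := by omega
    -- generic step
    have key : ∀ (j t v : ℕ), 0 < v → v < n → n - v < δ → r * (c+3)^j = n*t + v →
        (δ * (c+3)^j) % n < δ := by
      intro j t v hv0 hvn hvδ hrq
      set A : ℕ := (c+3)^j with hA
      set w : ℕ := (δ * A) % n with hw
      have hwn : w < n := Nat.mod_lt _ hnpos
      have hdm : n * (δ * A / n) + w = δ * A := Nat.div_add_mod _ _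
      set D : ℕ := δ * A / n with hD
      have hsum : δ * A + r * A = n * A := by rw [← add_mul, hδr]
      have hEq : n*D + w + (n*t + v) = n*A := by omega
      have hle : D + t + 1 ≤ A := by
        by_contra hcon
        have hA' : A ≤ D + t := by omega
        have h5 : n * A ≤ n * (D + t) := Nat.mul_le_mul_left n hA'
        have hexp : n * (D + t) = n*D + n*t := by ring
        omega
      have hge : A ≤ D + t + 1 := by
        by_contra hcon
        have hA' : D + t + 2 ≤ A := by omega
        have h5 : n * (D + t + 2) ≤ n * A := Nat.mul_le_mul_left n hA'
        have hexp : n * (D + t + 2) = n*D + n*t + n + n := by ring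
        omega
      have hAeq : A = D + t + 1 := by omega
      have hexp : n * A = n*D + n*t + n := by rw [hAeq]; ring
      omega
    rcases lt_trichotomy r (c^2+5*c+7) with hcase | hcase | hcase
    · -- small r : take j = 1
      have hb : r ≤ c^2+5*c+6 := by omega
      have hm1 : r * (c+3) = r*c + 3*r := by ring
      have hm2 : r*c ≤ (c^2+5*c+6)*c := Nat.mul_le_mul_right _ hb
      have hm3 : (c^2+5*c+6)*c = c^3+5*c^2+6*c := by ring
      exact ⟨1, key 1 0 (r * (c+3)) (by omega) (by omega) (by omega)
        (by rw [pow_one]; ring)⟩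
    · -- r = q^2 - q + 1 : take j = 3
      exact ⟨3, key 3 ((c+3)^2) ((c+3)^2) (by omega) (by omega) (by omega)
        (by rw [hcase, hn, hK]; ring)⟩
    · -- large r : take j = 2
      obtain ⟨u, hu⟩ : ∃ u, r = c^2+5*c+8 + u := ⟨r - (c^2+5*c+8), by omega⟩
      have hub : u ≤ c := by omega
      have hv1 : (u+1)*(c+3)^2 + (c+3) = u*c^2 + 6*(u*c) + 9*u + (c^2+7*c+12) := by ring
      have hv2 : u*c^2 ≤ c*c^2 := Nat.mul_le_mul_right _ hub
      have hv3 : c*c^2 = c^3 := by ring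
      have hv4 : u*c ≤ c*c := Nat.mul_le_mul_right _ hub
      have hv5 : c*c = c^2 := by ring
      exact ⟨2, key 2 (c+3) ((u+1)*(c+3)^2 + (c+3)) (by omega) (by omega) (by omega)
        (by rw [hu, hn, hK]; ring)⟩
  · -- nothing strictly between d2 and d2+1
    intro δ h1 h2
    omega
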